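/- (Theorem 1, exclusion of compute-bound offloading) Suppose R·Σ_{i∈F} C_i ≤ Σ_{i∈F_mem} C_i·B_h/(B_h+B_g). Then every optimal feasible allocation x satisfies x_i = 0 for all compute-bound operations i ∈ F_comp and x_i ≤ B_h/(B_h+B_g) for all memory-bound operations i ∈ F_mem. -/

import Mathlib

open Finset

/-- Offloading model: a finite nonempty set of operations `F` partitioned into
memory-bound operations `Fmem` and compute-bound operations `Fcomp`; host-GPU
interconnect bandwidth `Bh > 0`, GPU memory bandwidth `Bg > 0`, per-operation
compute bandwidths `Bi i ≥ Bh` (for compute-bound ops) and data sizes `Cd i > 0`. -/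
structure OffloadModel (ι : Type*) [DecidableEq ι] where
  F : Finset ι
  Fmem : Finset ι
  Fcomp : Finset ι
  Bh : ℝ
  Bg : ℝ
  Bi : ι → ℝ
  Cd : ι → ℝ
  hF : F.Nonempty
  hpart : Fmem ∪ Fcomp = F
  hdisj : Disjoint Fmem Fcomp
  hBh : 0 < Bh
  hBg : 0 < Bg
  hBi : ∀ i ∈ Fcomp, Bh ≤ Bi i
  hC : ∀ i ∈ F, 0 < Cd i

variable {ι : Type*} [DecidableEq ι]

/-- Latency of operation `i` under per-operation offloading ratio `x`. -/
noncomputable def OffloadModel.T (M : OffloadModel ι) (i : ι) (x : ℝ) : ℝ :=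
  if i ∈ M.Fmem then M.Cd i * max (x / M.Bh) ((1 - x) / M.Bg)
  else M.Cd i * max (1 / M.Bi i) (x / M.Bh)

/-- Turning point of operation `i`. -/
noncomputable def OffloadModel.turning (M : OffloadModel ι) (i : ι) : ℝ :=
  if i ∈ M.Fmem then M.Bh / (M.Bh + M.Bg) else M.Bh / M.Bi i

/-- An allocation `x` is feasible for global offloading ratio `R`. -/
def OffloadModel.Feasible (M : OffloadModel ι) (R : ℝ) (x : ι → ℝ) : Prop :=
  (∀ i ∈ M.F, 0 ≤ x i ∧ x i ≤ 1) ∧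
  ∑ i ∈ M.F, M.Cd i * x i = R * ∑ i ∈ M.F, M.Cd i

/-- The objective: total latency of an allocation. -/
noncomputable def OffloadModel.L (M : OffloadModel ι) (x : ι → ℝ) : ℝ :=
  ∑ i ∈ M.F, M.T i (x i)

/-- A feasible allocation is optimal if it minimizes the objective among all
feasible allocations. -/
def OffloadModel.Optimal (M : OffloadModel ι) (R : ℝ) (x : ι → ℝ) : Prop :=
  M.Feasible R x ∧ ∀ y, M.Feasible R y → M.L x ≤ M.L y

/-- Auxiliary: sum difference concentrated at two points. -/
lemma sum_two_diff (s : Finset ι) (f g : ι → ℝ) (j m : ι) (hj : j ∈ s) (hm : m ∈ s)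
    (hjm : j ≠ m) (h : ∀ i ∈ s, i ≠ j → i ≠ m → f i = g i) :
    ∑ i ∈ s, f i = ∑ i ∈ s, g i + ((f j - g j) + (f m - g m)) := by
  have hsub : ({j, m} : Finset ι) ⊆ s := by
    intro i hi
    rcases Finset.mem_insert.1 hi with rfl | hi
    · exact hj
    · rw [Finset.mem_singleton] at hi; exact hi ▸ hm
  have key : ∑ i ∈ ({j, m} : Finset ι), (f i - g i) = ∑ i ∈ s, (f i - g i) :=
    Finset.sum_subset hsub (by
      intro i his hnot
      have h1 : i ≠ j := fun e => hnot (by simp [e])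
      have h2 : i ≠ m := fun e => hnot (by simp [e])
      rw [h i his h1 h2]; ring)
  rw [Finset.sum_pair hjm] at key
  have hd : ∑ i ∈ s, (f i - g i) = ∑ i ∈ s, f i - ∑ i ∈ s, g i :=
    Finset.sum_sub_distrib f g
  linarith [key, hd]

/-- Auxiliary: a strictly improving two-point swap contradicts optimality. -/
lemma not_optimal_of_swap (M : OffloadModel ι) (R : ℝ) (x : ι → ℝ)
    (hfeas : M.Feasible R x) (j m : ι) (hj : j ∈ M.F) (hm : m ∈ M.F) (hjm : j ≠ m)
    (a b : ℝ) (ha0 : 0 ≤ a) (ha1 : a ≤ 1) (hb0 : 0 ≤ b) (hb1 : b ≤ 1)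
    (hw : M.Cd j * a + M.Cd m * b = M.Cd j * x j + M.Cd m * x m)
    (hlt : M.T j a + M.T m b < M.T j (x j) + M.T m (x m)) :
    ¬ M.Optimal R x := by
  intro hopt
  set y : ι → ℝ := fun i => if i = j then a else if i = m then b else x i with hy
  have hyj : y j = a := by simp [hy]
  have hym : y m = b := by simp [hy, hjm.symm]
  have hyo : ∀ i, i ≠ j → i ≠ m → y i = x i := by
    intro i h1 h2; simp [hy, h1, h2]
  have hfy : M.Feasible R y := by
    constructor
    · intro i hi
      by_cases h1 : i = j
      · subst h1; rw [hyj]; exact ⟨ha0, ha1⟩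
      by_cases h2 : i = m
      · subst h2; rw [hym]; exact ⟨hb0, hb1⟩
      · rw [hyo i h1 h2]; exact hfeas.1 i hi
    · have hs := sum_two_diff M.F (fun i => M.Cd i * y i) (fun i => M.Cd i * x i)
        j m hj hm hjm (fun i _ h1 h2 => by rw [hyo i h1 h2])
      rw [hs, hyj, hym, hfeas.2]; linarith
  have hL := sum_two_diff M.F (fun i => M.T i (y i)) (fun i => M.T i (x i))
    j m hj hm hjm (fun i _ h1 h2 => by rw [hyo i h1 h2])
  have hle := hopt.2 y hfy
  unfold OffloadModel.L at hle
  rw [hL, hyj, hym] at hle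
  linarith

/-- Auxiliary: memory-bound latency below the turning point. -/
lemma max_mem_le {Bh Bg x : ℝ} (hBh : 0 < Bh) (hBg : 0 < Bg)
    (hx : x ≤ Bh / (Bh + Bg)) : max (x / Bh) ((1 - x) / Bg) = (1 - x) / Bg := by
  have hBhg : 0 < Bh + Bg := by linarith
  have h1 : x * (Bh + Bg) ≤ Bh := (le_div_iff₀ hBhg).mp hx
  apply max_eq_right
  rw [div_le_div_iff₀ hBh hBg]; nlinarith

/-- Auxiliary: memory-bound latency above the turning point. -/
lemma max_mem_ge {Bh Bg x : ℝ} (hBh : 0 < Bh) (hBg : 0 < Bg)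
    (hx : Bh / (Bh + Bg) ≤ x) : max (x / Bh) ((1 - x) / Bg) = x / Bh := by
  have hBhg : 0 < Bh + Bg := by linarith
  have h1 : Bh ≤ x * (Bh + Bg) := (div_le_iff₀ hBhg).mp hx
  apply max_eq_left
  rw [div_le_div_iff₀ hBg hBh]; nlinarith

/-- Theorem 1 (exclusion of compute-bound offloading): if the budget fits within the
memory-bound turning points, every optimal feasible allocation offloads nothing from
compute-bound operations and keeps memory-bound ops at or below their turning point. -/
theorem stmt11 (M : OffloadModel ι) (R : ℝ) (hR0 : 0 ≤ R) (hR1 : R ≤ 1)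
    (hbudget : R * ∑ i ∈ M.F, M.Cd i ≤
      ∑ i ∈ M.Fmem, M.Cd i * (M.Bh / (M.Bh + M.Bg)))
    (x : ι → ℝ) (hopt : M.Optimal R x) :
    (∀ i ∈ M.Fcomp, x i = 0) ∧ (∀ i ∈ M.Fmem, x i ≤ M.Bh / (M.Bh + M.Bg)) := by
  obtain ⟨hfeas, hmin⟩ := hopt
  have hBhg : 0 < M.Bh + M.Bg := by linarith [M.hBh, M.hBg]
  set t : ℝ := M.Bh / (M.Bh + M.Bg) with ht
  have ht0 : 0 < t := div_pos M.hBh hBhg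
  have ht1 : t < 1 := by rw [ht, div_lt_one hBhg]; linarith [M.hBg]
  have hmemF : M.Fmem ⊆ M.F := M.hpart ▸ Finset.subset_union_left
  have hcompF : M.Fcomp ⊆ M.F := M.hpart ▸ Finset.subset_union_right
  have hsplit : ∑ i ∈ M.F, M.Cd i * x i
      = ∑ i ∈ M.Fmem, M.Cd i * x i + ∑ i ∈ M.Fcomp, M.Cd i * x i := by
    rw [← M.hpart, Finset.sum_union M.hdisj]
  by_cases hall : ∀ i ∈ M.Fmem, t ≤ x i
  · -- all mem ops at or above t: budget forces x = t on mem, 0 on comp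
    have h1 : ∑ i ∈ M.Fmem, M.Cd i * t ≤ ∑ i ∈ M.Fmem, M.Cd i * x i :=
      Finset.sum_le_sum fun i hi =>
        mul_le_mul_of_nonneg_left (hall i hi) (le_of_lt (M.hC i (hmemF hi)))
    have h2 : 0 ≤ ∑ i ∈ M.Fcomp, M.Cd i * x i :=
      Finset.sum_nonneg fun i hi =>
        mul_nonneg (le_of_lt (M.hC i (hcompF hi))) (hfeas.1 i (hcompF hi)).1
    have hkey : ∑ i ∈ M.Fmem, M.Cd i * x i + ∑ i ∈ M.Fcomp, M.Cd i * x i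
        ≤ ∑ i ∈ M.Fmem, M.Cd i * t := by
      rw [← hsplit, hfeas.2]; exact hbudget
    have hcomp0 : ∑ i ∈ M.Fcomp, M.Cd i * x i = 0 := le_antisymm (by linarith) h2
    constructor
    · intro i hi
      have := (Finset.sum_eq_zero_iff_of_nonneg (fun i hi =>
        mul_nonneg (le_of_lt (M.hC i (hcompF hi))) (hfeas.1 i (hcompF hi)).1)).mp
        hcomp0 i hi
      have hCi := M.hC i (hcompF hi)
      exact (mul_eq_zero.mp this).resolve_left (ne_of_gt hCi)
    · intro i hi
      -- each mem op equals t
      have hsum_eq : ∑ i ∈ M.Fmem, (M.Cd i * x i - M.Cd i * t) = 0 := by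
        rw [Finset.sum_sub_distrib]; linarith
      have := (Finset.sum_eq_zero_iff_of_nonneg (fun i hi => by
        have := mul_le_mul_of_nonneg_left (hall i hi) (le_of_lt (M.hC i (hmemF hi)))
        linarith)).mp hsum_eq i hi
      have hCi := M.hC i (hmemF hi)
      nlinarith
  · push_neg at hall
    obtain ⟨m, hmF, hmlt⟩ := hall
    have hCm := M.hC m (hmemF hmF)
    constructor
    · intro j hj
      by_contra hne
      have hCj := M.hC j (hcompF hj)
      have hxj0 : 0 < x j := lt_of_le_of_ne (hfeas.1 j (hcompF hj)).1 (Ne.symm hne)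
      have hjm : j ≠ m := by
        intro e; subst e
        exact (Finset.disjoint_right.mp M.hdisj hj) hmF
      set ε : ℝ := min (M.Cd j * x j) (M.Cd m * (t - x m)) with hε
      have hε0 : 0 < ε := lt_min (mul_pos hCj hxj0) (mul_pos hCm (by linarith))
      set a : ℝ := x j - ε / M.Cd j with ha
      set b : ℝ := x m + ε / M.Cd m with hb
      clear_value a b
      have hax : a ≤ x j := by
        rw [ha]
        have : 0 < ε / M.Cd j := div_pos hε0 hCj
        linarith
      have ha0 : 0 ≤ a := by
        rw [ha]
        have : ε / M.Cd j ≤ x j := by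
          rw [div_le_iff₀ hCj]
          calc ε ≤ M.Cd j * x j := min_le_left _ _
            _ = x j * M.Cd j := by ring
        linarith
      have hbx : x m < b := by
        rw [hb]
        have : 0 < ε / M.Cd m := div_pos hε0 hCm
        linarith
      have hbt : b ≤ t := by
        rw [hb]
        have : ε / M.Cd m ≤ t - x m := by
          rw [div_le_iff₀ hCm]
          calc ε ≤ M.Cd m * (t - x m) := min_le_right _ _
            _ = (t - x m) * M.Cd m := by ring
        linarith
      have hxm0 : 0 ≤ x m := (hfeas.1 m (hmemF hmF)).1
      have hw : M.Cd j * a + M.Cd m * b = M.Cd j * x j + M.Cd m * x m := by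
        rw [ha, hb]
        field_simp
        ring
      have hjmem : j ∉ M.Fmem := Finset.disjoint_right.mp M.hdisj hj
      have hTj : M.T j a ≤ M.T j (x j) := by
        unfold OffloadModel.T
        rw [if_neg hjmem, if_neg hjmem]
        apply mul_le_mul_of_nonneg_left _ (le_of_lt hCj)
        exact max_le_max le_rfl ((div_le_div_iff_of_pos_right M.hBh).mpr hax)
      have hTm : M.T m b < M.T m (x m) := by
        unfold OffloadModel.T
        rw [if_pos hmF, if_pos hmF,
          max_mem_le M.hBh M.hBg hbt, max_mem_le M.hBh M.hBg (le_of_lt hmlt)]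
        apply mul_lt_mul_of_pos_left _ hCm
        exact (div_lt_div_iff_of_pos_right M.hBg).mpr (by linarith)
      exact not_optimal_of_swap M R x hfeas j m (hcompF hj) (hmemF hmF) hjm a b
        ha0 (le_trans hax (hfeas.1 j (hcompF hj)).2) (by linarith) (by linarith)
        hw (by linarith) ⟨hfeas, hmin⟩
    · intro k hk
      by_contra hne
      push_neg at hne
      have hCk := M.hC k (hmemF hk)
      have hkm : k ≠ m := by intro e; subst e; linarith
      set ε : ℝ := min (M.Cd k * (x k - t)) (M.Cd m * (t - x m)) with hε
      have hε0 : 0 < ε := lt_min (mul_pos hCk (by linarith)) (mul_pos hCm (by linarith))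
      set a : ℝ := x k - ε / M.Cd k with ha
      set b : ℝ := x m + ε / M.Cd m with hb
      clear_value a b
      have hax : a < x k := by
        rw [ha]
        have : 0 < ε / M.Cd k := div_pos hε0 hCk
        linarith
      have hat : t ≤ a := by
        rw [ha]
        have : ε / M.Cd k ≤ x k - t := by
          rw [div_le_iff₀ hCk]
          calc ε ≤ M.Cd k * (x k - t) := min_le_left _ _
            _ = (x k - t) * M.Cd k := by ring
        linarith
      have hbx : x m < b := by
        rw [hb]
        have : 0 < ε / M.Cd m := div_pos hε0 hCm
        linarith
      have hbt : b ≤ t := by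
        rw [hb]
        have : ε / M.Cd m ≤ t - x m := by
          rw [div_le_iff₀ hCm]
          calc ε ≤ M.Cd m * (t - x m) := min_le_right _ _
            _ = (t - x m) * M.Cd m := by ring
        linarith
      have hxm0 : 0 ≤ x m := (hfeas.1 m (hmemF hmF)).1
      have hw : M.Cd k * a + M.Cd m * b = M.Cd k * x k + M.Cd m * x m := by
        rw [ha, hb]; field_simp; ring
      have hTk : M.T k a < M.T k (x k) := by
        unfold OffloadModel.T
        rw [if_pos hk, if_pos hk,
          max_mem_ge M.hBh M.hBg hat, max_mem_ge M.hBh M.hBg (le_of_lt (lt_of_le_of_lt hat hax))]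
        apply mul_lt_mul_of_pos_left _ hCk
        exact (div_lt_div_iff_of_pos_right M.hBh).mpr hax
      have hTm : M.T m b < M.T m (x m) := by
        unfold OffloadModel.T
        rw [if_pos hmF, if_pos hmF,
          max_mem_le M.hBh M.hBg hbt, max_mem_le M.hBh M.hBg (le_of_lt hmlt)]
        apply mul_lt_mul_of_pos_left _ hCm
        exact (div_lt_div_iff_of_pos_right M.hBg).mpr (by linarith)
      exact not_optimal_of_swap M R x hfeas k m (hmemF hk) (hmemF hmF) hkm a b
        (by linarith) (le_of_lt (lt_of_lt_of_le hax (hfeas.1 k (hmemF hk)).2)) (by linarith) (by linarith)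
        hw (by linarith) ⟨hfeas, hmin⟩
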